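/- Let φ : (−1,1) → ℝ be a C² solution of Lφ = 0 that is nonincreasing and strictly positive on (−1,1). Then φ''(x) ≥ 0 for all x ∈ (−1,1), i.e., φ is convex on (−1,1). -/

import Mathlib

open Set Filter Topology

/-- If the derivative at `a` is negative, then `f x < f a` for `x` slightly to the right. -/
lemma aux_eventually_right_lt {f : ℝ → ℝ} {d a : ℝ} (hf : HasDerivAt f d a) (hd : d < 0) :
    ∀ᶠ x in 𝓝[>] a, f x < f a := by
  have hslope : Tendsto (slope f a) (𝓝[≠] a) (𝓝 d) := hasDerivAt_iff_tendsto_slope.mp hf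
  have h1 : ∀ᶠ x in 𝓝[≠] a, slope f a x < 0 := hslope.eventually_lt_const hd
  have h2 : ∀ᶠ x in 𝓝[>] a, slope f a x < 0 :=
    h1.filter_mono (nhdsWithin_mono a (fun x hx => ne_of_gt hx))
  filter_upwards [h2, self_mem_nhdsWithin] with x hx hxa
  have hxa' : (0:ℝ) < x - a := sub_pos.2 hxa
  rw [slope_def_field] at hx
  have := (div_lt_iff₀ hxa').mp hx
  linarith

/-- Antitone from nonpositive derivative on `Ico a b`. -/
lemma aux_antitoneOn {f f' : ℝ → ℝ} {a b : ℝ}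
    (hd : ∀ x ∈ Set.Ico a b, HasDerivAt f (f' x) x)
    (h0 : ∀ x ∈ Set.Ioo a b, f' x ≤ 0) : AntitoneOn f (Set.Ico a b) := by
  apply antitoneOn_of_deriv_nonpos (convex_Ico a b)
  · exact fun x hx => (hd x hx).continuousAt.continuousWithinAt
  · intro x hx
    rw [interior_Ico] at hx
    exact ((hd x (Ioo_subset_Ico_self hx)).differentiableAt).differentiableWithinAt
  · intro x hx
    rw [interior_Ico] at hx
    rw [(hd x (Ioo_subset_Ico_self hx)).deriv]
    exact h0 x hx

set_option maxHeartbeats 1000000 in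
/-- A nonincreasing strictly positive solution `φ` of `Lφ = 0` on `(−1,1)` satisfies
`φ'' ≥ 0`, i.e. `φ` is convex on `(−1,1)`. -/
theorem stmt2 (lam mu alp : ℝ) (hlam : 0 < lam) (hmu : 0 < mu) (halp : 0 < alp)
    (φ φ' φ'' : ℝ → ℝ)
    (hd1 : ∀ x ∈ Set.Ioo (-1 : ℝ) 1, HasDerivAt φ (φ' x) x)
    (hd2 : ∀ x ∈ Set.Ioo (-1 : ℝ) 1, HasDerivAt φ' (φ'' x) x)
    (hode : ∀ x ∈ Set.Ioo (-1 : ℝ) 1,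
      mu ^ 2 / 2 * (1 - x ^ 2) ^ 2 * φ'' x - 2 * lam * x * φ' x - alp * φ x = 0)
    (hanti : AntitoneOn φ (Set.Ioo (-1 : ℝ) 1))
    (hpos : ∀ x ∈ Set.Ioo (-1 : ℝ) 1, 0 < φ x) :
    (∀ x ∈ Set.Ioo (-1 : ℝ) 1, 0 ≤ φ'' x) ∧ ConvexOn ℝ (Set.Ioo (-1 : ℝ) 1) φ := by
  -- φ' ≤ 0 on I
  have hφ'le : ∀ x ∈ Set.Ioo (-1 : ℝ) 1, φ' x ≤ 0 := by
    intro x hx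
    have hx1 : x < 1 := hx.2
    have hslope : Tendsto (slope φ x) (𝓝[≠] x) (𝓝 (φ' x)) :=
      hasDerivAt_iff_tendsto_slope.mp (hd1 x hx)
    have hslope' : Tendsto (slope φ x) (𝓝[>] x) (𝓝 (φ' x)) :=
      hslope.mono_left (nhdsWithin_mono x (fun y hy => ne_of_gt hy))
    refine le_of_tendsto hslope' ?_
    have hmem : Set.Ioo x 1 ∈ 𝓝[>] x := Ioo_mem_nhdsGT_of_mem ⟨le_refl x, hx1⟩
    filter_upwards [hmem] with y hy
    have hyI : y ∈ Set.Ioo (-1 : ℝ) 1 := ⟨lt_trans hx.1 hy.1, hy.2⟩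
    have : φ y ≤ φ x := hanti hx hyI (le_of_lt hy.1)
    rw [slope_def_field]
    apply div_nonpos_of_nonpos_of_nonneg (by linarith) (by linarith [hy.1])
  -- the auxiliary function g
  obtain ⟨g, hgdef⟩ : ∃ g : ℝ → ℝ, g = fun x => 2 * lam * x * φ' x + alp * φ x := ⟨_, rfl⟩
  have hgval : ∀ x, g x = 2 * lam * x * φ' x + alp * φ x := by
    intro x; rw [hgdef]
  have hgeq : ∀ x ∈ Set.Ioo (-1 : ℝ) 1, g x = mu ^ 2 / 2 * (1 - x ^ 2) ^ 2 * φ'' x := by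
    intro x hx
    have := hode x hx
    rw [hgval x]
    linarith
  have hgd : ∀ x ∈ Set.Ioo (-1 : ℝ) 1,
      HasDerivAt g (2 * lam * (φ' x + x * φ'' x) + alp * φ' x) x := by
    intro x hx
    have h1 : HasDerivAt (fun y : ℝ => y * φ' y) (1 * φ' x + x * φ'' x) x :=
      (hasDerivAt_id x).mul (hd2 x hx)
    have h2 : HasDerivAt (fun y : ℝ => 2 * lam * (y * φ' y)) (2 * lam * (1 * φ' x + x * φ'' x)) x :=
      h1.const_mul (2 * lam)
    have h3 : HasDerivAt (fun y : ℝ => alp * φ y) (alp * φ' x) x := (hd1 x hx).const_mul alp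
    have h4 := h2.add h3
    have heq : g = fun y : ℝ => 2 * lam * (y * φ' y) + alp * φ y := by
      rw [hgdef]; funext y; ring
    rw [heq]
    exact h4.congr_deriv (by ring)
  -- coefficient positivity
  have hcoef : ∀ x ∈ Set.Ioo (-1 : ℝ) 1, 0 < mu ^ 2 / 2 * (1 - x ^ 2) ^ 2 := by
    intro x hx
    have h1 : x ^ 2 < 1 := by nlinarith [hx.1, hx.2]
    have : (0:ℝ) < 1 - x ^ 2 := by linarith
    positivity
  -- Main claim
  have key : ∀ x ∈ Set.Ioo (-1 : ℝ) 1, 0 ≤ φ'' x := by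
    by_contra hcon
    push_neg at hcon
    obtain ⟨x₀, hx₀I, hx₀neg⟩ := hcon
    obtain ⟨c, hcdef⟩ : ∃ c : ℝ, c = g x₀ := ⟨_, rfl⟩
    have hcneg : c < 0 := by
      rw [hcdef, hgeq x₀ hx₀I]
      exact mul_neg_of_pos_of_neg (hcoef x₀ hx₀I) hx₀neg
    have hx₀pos : 0 < x₀ := by
      by_contra h
      push_neg at h
      have h1 : 0 ≤ x₀ * φ' x₀ := by nlinarith [hφ'le x₀ hx₀I]
      have h2 : 0 < alp * φ x₀ := mul_pos halp (hpos x₀ hx₀I)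
      have hc' : c = 2 * lam * x₀ * φ' x₀ + alp * φ x₀ := by rw [hcdef, hgval]
      nlinarith
    have hx₀1 : x₀ < 1 := hx₀I.2
    have hIcoI : Set.Ico x₀ 1 ⊆ Set.Ioo (-1 : ℝ) 1 := fun y hy => ⟨by linarith [hy.1], hy.2⟩
    -- Step A: g ≤ c on [x₀, 1)
    have stepA : ∀ b ∈ Set.Ico x₀ 1, g b ≤ c := by
      rintro b ⟨hx₀b, hb1⟩
      set A : Set ℝ := {x ∈ Set.Icc x₀ b | ∀ y ∈ Set.Icc x₀ x, g y ≤ c} with hAdef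
      have hx₀A : x₀ ∈ A := by
        refine ⟨⟨le_refl _, hx₀b⟩, ?_⟩
        intro y hy
        have hyx : y = x₀ := le_antisymm hy.2 hy.1
        rw [hyx, ← hcdef]
      have hAne : A.Nonempty := ⟨x₀, hx₀A⟩
      have hAbdd : BddAbove A := ⟨b, fun x hx => hx.1.2⟩
      obtain ⟨s, hsdef⟩ : ∃ s : ℝ, s = sSup A := ⟨_, rfl⟩
      have hx₀s : x₀ ≤ s := by rw [hsdef]; exact le_csSup hAbdd hx₀A
      have hsb : s ≤ b := by rw [hsdef]; exact csSup_le hAne (fun x hx => hx.1.2)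
      have hsI : s ∈ Set.Ioo (-1 : ℝ) 1 := hIcoI ⟨hx₀s, lt_of_le_of_lt hsb hb1⟩
      -- g ≤ c on [x₀, s)
      have hlt : ∀ y ∈ Set.Ico x₀ s, g y ≤ c := by
        rintro y ⟨hy1, hy2⟩
        rw [hsdef] at hy2
        obtain ⟨a, haA, hya⟩ := exists_lt_of_lt_csSup hAne hy2
        exact haA.2 y ⟨hy1, le_of_lt hya⟩
      -- g s ≤ c
      have hgs : g s ≤ c := by
        rcases eq_or_lt_of_le hx₀s with heq | hlt'
        · rw [← heq, ← hcdef]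
        · have hcont : Tendsto g (𝓝[<] s) (𝓝 (g s)) :=
            ((hgd s hsI).continuousAt.tendsto).mono_left nhdsWithin_le_nhds
          refine le_of_tendsto hcont ?_
          have hmem : Set.Ioo x₀ s ∈ 𝓝[<] s := Ioo_mem_nhdsLT_of_mem ⟨hlt', le_refl s⟩
          filter_upwards [hmem] with y hy
          exact hlt y ⟨le_of_lt hy.1, hy.2⟩
      have hsA : s ∈ A := by
        refine ⟨⟨hx₀s, hsb⟩, ?_⟩
        rintro y ⟨hy1, hy2⟩
        rcases eq_or_lt_of_le hy2 with heq | hlt'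
        · rw [heq]; exact hgs
        · exact hlt y ⟨hy1, hlt'⟩
      -- show s = b
      rcases eq_or_lt_of_le hsb with heq | hsltb
      · exact hsA.2 b ⟨hx₀b, by rw [heq]⟩
      · exfalso
        -- derivative of g at s is negative
        have hgsneg : g s < 0 := lt_of_le_of_lt hgs hcneg
        have hgsneg2 : mu ^ 2 / 2 * (1 - s ^ 2) ^ 2 * φ'' s < 0 := by
          rw [← hgeq s hsI]; exact hgsneg
        have hφ''s : φ'' s < 0 := by
          by_contra h
          push_neg at h
          nlinarith [mul_nonneg (hcoef s hsI).le h]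
        have hspos : 0 < s := lt_of_lt_of_le hx₀pos hx₀s
        have hgs' : 2 * lam * s * φ' s + alp * φ s < 0 := by rw [← hgval]; exact hgsneg
        have hφ's : φ' s < 0 := by
          have h2 : 0 < alp * φ s := mul_pos halp (hpos s hsI)
          by_contra hcc
          push_neg at hcc
          nlinarith [mul_nonneg (mul_nonneg (by linarith : (0:ℝ) ≤ 2 * lam) hspos.le) hcc]
        have hderneg : 2 * lam * (φ' s + s * φ'' s) + alp * φ' s < 0 := by
          have t1 : lam * φ' s < 0 := mul_neg_of_pos_of_neg hlam hφ's
          have t2 : lam * s * φ'' s < 0 := mul_neg_of_pos_of_neg (mul_pos hlam hspos) hφ''s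
          have t3 : alp * φ' s < 0 := mul_neg_of_pos_of_neg halp hφ's
          nlinarith [t1, t2, t3]
        have hev := aux_eventually_right_lt (hgd s hsI) hderneg
        obtain ⟨u, hu, hsub⟩ := mem_nhdsGT_iff_exists_Ioo_subset.mp hev
        have hu' : s < u := hu
        obtain ⟨x₂, hx₂def⟩ : ∃ x₂ : ℝ, x₂ = min ((s + u) / 2) ((s + b) / 2) := ⟨_, rfl⟩
        have hx₂s : s < x₂ := by
          rw [hx₂def]; apply lt_min <;> linarith
        have hx₂b : x₂ ≤ b := by
          rw [hx₂def]; exact le_trans (min_le_right _ _) (by linarith)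
        have hx₂u : x₂ < u := by
          rw [hx₂def]; exact lt_of_le_of_lt (min_le_left _ _) (by linarith)
        have hx₂A : x₂ ∈ A := by
          refine ⟨⟨by linarith, hx₂b⟩, ?_⟩
          rintro y ⟨hy1, hy2⟩
          rcases le_or_gt y s with h | h
          · exact hsA.2 y ⟨hy1, h⟩
          · have hyu : y ∈ Set.Ioo s u := ⟨h, lt_of_le_of_lt hy2 hx₂u⟩
            have := hsub hyu
            simp only [Set.mem_setOf_eq] at this
            linarith
        have : x₂ ≤ s := by rw [hsdef]; exact le_csSup hAbdd hx₂A
        linarith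
    -- Step B: quantitative blow-up
    obtain ⟨K, hKdef⟩ : ∃ K : ℝ, K = -c / (2 * mu ^ 2) := ⟨_, rfl⟩
    have hKpos : 0 < K := by
      rw [hKdef]
      apply div_pos (by linarith)
      positivity
    have hbound : ∀ x ∈ Set.Ico x₀ 1, φ'' x ≤ -(K / (1 - x) ^ 2) := by
      intro x hx
      have hxI : x ∈ Set.Ioo (-1 : ℝ) 1 := hIcoI hx
      have hgx : mu ^ 2 / 2 * (1 - x ^ 2) ^ 2 * φ'' x ≤ c := by
        rw [← hgeq x hxI]; exact stepA x hx
      have hx1 : x < 1 := hx.2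
      have hxpos : 0 < x := lt_of_lt_of_le hx₀pos hx.1
      have h1x : (0:ℝ) < 1 - x := by linarith
      have hφ''x : φ'' x < 0 := by
        by_contra h
        push_neg at h
        nlinarith [mul_nonneg (hcoef x hxI).le h]
      have h2sq : (0:ℝ) < (1 - x) ^ 2 := by positivity
      rw [← neg_div, le_div_iff₀ h2sq]
      -- goal : φ'' x * (1 - x) ^ 2 ≤ -K
      have hKval : c = -K * (2 * mu ^ 2) := by
        rw [hKdef]; field_simp
      have hP : (0:ℝ) ≤ mu ^ 2 * (1 - x) ^ 2 * (4 - (1 + x) ^ 2) := by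
        apply mul_nonneg (mul_nonneg (sq_nonneg mu) (sq_nonneg (1 - x)))
        nlinarith [hxI.1, hxI.2]
      have hC : mu ^ 2 / 2 * (1 - x ^ 2) ^ 2 ≤ 2 * mu ^ 2 * (1 - x) ^ 2 := by
        nlinarith [hP]
      have hM := mul_le_mul_of_nonpos_left hC (le_of_lt hφ''x)
      have hmu2 : (0:ℝ) < 2 * mu ^ 2 := by positivity
      nlinarith [hM, hgx, hmu2]
    -- F = φ' + K/(1-x) is antitone on [x₀,1)
    have hinvd : ∀ x ∈ Set.Ico x₀ 1,
        HasDerivAt (fun y : ℝ => K / (1 - y)) (K / (1 - x) ^ 2) x := by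
      intro x hx
      have h1x : (1:ℝ) - x ≠ 0 := by intro h; linarith [hx.2]
      have hbase : HasDerivAt (fun y : ℝ => 1 - y) (-1) x := by
        simpa using (hasDerivAt_id x).const_sub 1
      have hkey : HasDerivAt (fun y : ℝ => K * (1 - y)⁻¹) (K * (-(-1) / (1 - x) ^ 2)) x :=
        (hbase.inv h1x).const_mul K
      have hval : K * (-(-1) / (1 - x) ^ 2) = K / (1 - x) ^ 2 := by ring
      rw [hval] at hkey
      have hfun : (fun y : ℝ => K / (1 - y)) = fun y : ℝ => K * (1 - y)⁻¹ := by
        funext y; rw [div_eq_mul_inv]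
      rw [hfun]
      exact hkey
    obtain ⟨F, hFdef⟩ : ∃ F : ℝ → ℝ, F = fun x => φ' x + K / (1 - x) := ⟨_, rfl⟩
    have hFd : ∀ x ∈ Set.Ico x₀ 1, HasDerivAt F (φ'' x + K / (1 - x) ^ 2) x := by
      intro x hx
      rw [hFdef]
      exact (hd2 x (hIcoI hx)).add (hinvd x hx)
    have hFanti : AntitoneOn F (Set.Ico x₀ 1) := by
      apply aux_antitoneOn hFd
      intro x hx
      have := hbound x (Ioo_subset_Ico_self hx)
      linarith
    obtain ⟨Dd, hDdef⟩ : ∃ Dd : ℝ, Dd = φ' x₀ + K / (1 - x₀) := ⟨_, rfl⟩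
    have hφ'bound : ∀ x ∈ Set.Ico x₀ 1, φ' x ≤ Dd - K / (1 - x) := by
      intro x hx
      have h := hFanti ⟨le_refl x₀, hx₀1⟩ hx hx.1
      rw [hFdef] at h
      simp only at h
      rw [hDdef]
      linarith
    -- G = φ - Dd*x - K*log(1-x) is antitone on [x₀,1)
    have hlogd : ∀ x ∈ Set.Ico x₀ 1,
        HasDerivAt (fun y : ℝ => K * Real.log (1 - y)) (-(K / (1 - x))) x := by
      intro x hx
      have h1x : (0:ℝ) < 1 - x := by linarith [hx.2]
      have hbase : HasDerivAt (fun y : ℝ => 1 - y) (-1) x := by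
        simpa using (hasDerivAt_id x).const_sub 1
      have hkey := ((Real.hasDerivAt_log (ne_of_gt h1x)).comp x hbase).const_mul K
      have hval : K * ((1 - x)⁻¹ * -1) = -(K / (1 - x)) := by field_simp
      rw [hval] at hkey
      exact hkey
    obtain ⟨G, hGdef⟩ : ∃ G : ℝ → ℝ, G = fun x => φ x - Dd * x - K * Real.log (1 - x) :=
      ⟨_, rfl⟩
    have hGd : ∀ x ∈ Set.Ico x₀ 1, HasDerivAt G (φ' x - Dd + K / (1 - x)) x := by
      intro x hx
      have h1 : HasDerivAt (fun y : ℝ => φ y - Dd * y) (φ' x - Dd) x := by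
        exact ((hd1 x (hIcoI hx)).sub ((hasDerivAt_id x).const_mul Dd)).congr_deriv (by ring)
      have h2 := h1.sub (hlogd x hx)
      rw [hGdef]
      exact h2.congr_deriv (by ring)
    have hGanti : AntitoneOn G (Set.Ico x₀ 1) := by
      apply aux_antitoneOn hGd
      intro x hx
      have := hφ'bound x (Ioo_subset_Ico_self hx)
      linarith
    have hGle : ∀ x ∈ Set.Ico x₀ 1,
        φ x - Dd * x - K * Real.log (1 - x) ≤ φ x₀ - Dd * x₀ - K * Real.log (1 - x₀) := by
      intro x hx
      have h := hGanti ⟨le_refl x₀, hx₀1⟩ hx hx.1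
      rw [hGdef] at h
      simpa using h
    obtain ⟨C0, hC0def⟩ : ∃ C0 : ℝ, C0 = φ x₀ - Dd * x₀ - K * Real.log (1 - x₀) := ⟨_, rfl⟩
    -- choose x₁ close to 1
    obtain ⟨T, hTdef⟩ : ∃ T : ℝ, T = (-C0 - |Dd| - 1) / K := ⟨_, rfl⟩
    obtain ⟨ε, hεdef⟩ : ∃ ε : ℝ, ε = min ((1 - x₀) / 2) (Real.exp T) := ⟨_, rfl⟩
    have hεpos : 0 < ε := by
      rw [hεdef]; exact lt_min (by linarith) (Real.exp_pos T)
    have hεle : ε ≤ (1 - x₀) / 2 := by rw [hεdef]; exact min_le_left _ _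
    have hεexp : ε ≤ Real.exp T := by rw [hεdef]; exact min_le_right _ _
    obtain ⟨x₁, hx₁def⟩ : ∃ x₁ : ℝ, x₁ = 1 - ε := ⟨_, rfl⟩
    have hx₁lt1 : x₁ < 1 := by rw [hx₁def]; linarith
    have hx₁ge : x₀ ≤ x₁ := by rw [hx₁def]; linarith
    have hx₁Ico : x₁ ∈ Set.Ico x₀ 1 := ⟨hx₁ge, hx₁lt1⟩
    have hx₁I : x₁ ∈ Set.Ioo (-1 : ℝ) 1 := hIcoI hx₁Ico
    have hlogε : Real.log ε ≤ T := by
      calc Real.log ε ≤ Real.log (Real.exp T) := Real.log_le_log hεpos hεexp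
        _ = T := Real.log_exp T
    have h1x₁ : 1 - x₁ = ε := by rw [hx₁def]; ring
    have hKT : K * T = -C0 - |Dd| - 1 := by
      rw [hTdef]; field_simp
    have hKlog : K * Real.log ε ≤ -C0 - |Dd| - 1 := by
      calc K * Real.log ε ≤ K * T := mul_le_mul_of_nonneg_left hlogε (le_of_lt hKpos)
        _ = -C0 - |Dd| - 1 := hKT
    have hDdx₁ : Dd * x₁ ≤ |Dd| := by
      have h0 : 0 < x₁ := lt_of_lt_of_le hx₀pos hx₁ge
      nlinarith [le_abs_self Dd, abs_nonneg Dd]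
    have hφx₁ : φ x₁ ≤ -1 := by
      have h := hGle x₁ hx₁Ico
      rw [h1x₁, ← hC0def] at h
      linarith
    linarith [hpos x₁ hx₁I]
  refine ⟨key, ?_⟩
  -- Convexity
  have hint : interior (Set.Ioo (-1 : ℝ) 1) = Set.Ioo (-1 : ℝ) 1 :=
    interior_eq_iff_isOpen.mpr isOpen_Ioo
  apply convexOn_of_hasDerivWithinAt2_nonneg (convex_Ioo _ _) (f' := φ') (f'' := φ'')
  · intro x hx
    exact ((hd1 x hx).continuousAt).continuousWithinAt
  · intro x hx
    rw [hint] at hx ⊢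
    exact (hd1 x hx).hasDerivWithinAt
  · intro x hx
    rw [hint] at hx ⊢
    exact (hd2 x hx).hasDerivWithinAt
  · intro x hx
    rw [hint] at hx
    exact key x hx
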